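/- Let n ≥ 1 and let A, B, C ∈ ℂ^{n×n}. For t ∈ ℝ sufficiently small, the matrices I − tA/2, I − tB/2, I − tC/2 and I + P(t) are invertible, where P(t) = Cay(tA)·Cay(tB)·Cay(tC), and the matrix Ω(t) = 2(P(t) − I)(I + P(t))^{-1} satisfies Cay(Ω(t)) = P(t). Moreover, as t → 0, Ω(t) − [ t(A + B + C) + (t²/2)([A,B] + [A,C] + [B,C]) + t³( (1/4)[[A,B],C] − (1/4)(ACB + BCA) − (1/4)(ABA + ACA + BAB + BCB + CAC + CBC) ) ] = O(t⁴), i.e. there exist C₀, δ > 0 such that the norm of this difference is at most C₀|t|⁴ for |t| < δ. (Cayley–BCH formula for a product of three Cayley transforms.) -/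

import Mathlib

open scoped Matrix
open Asymptotics Filter

attribute [local instance] Matrix.frobeniusNormedAddCommGroup Matrix.frobeniusNormedSpace
  Matrix.frobeniusNormedRing

section RingDefs
variable {R : Type*} [Ring R]

def sE (x : R) : R := 1 + 2*x + 2*(x*x) + 2*(x*x*x)
def rho1E (x y z : R) : R := 2*(x+y+z)
def QE (x y z : R) : R := 2*(x*x+y*y+z*z) + 4*(x*y+x*z+y*z)
def KE (x y z : R) : R := 2*(x*x*x+y*y*y+z*z*z) + 4*(x*x*y+x*x*z+x*y*y+x*z*z+y*y*z+y*z*z) + 8*(x*y*z)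
def GE (x y z : R) : R :=
  4*(x*x*x*y) + 4*(x*x*x*z) + 4*(x*x*y*y) + 8*(x*x*y*z) + 4*(x*x*z*z) + 4*(x*y*y*y) + 8*(x*y*y*z) + 8*(x*y*z*z) + 4*(x*z*z*z) + 4*(y*y*y*z) + 4*(y*y*z*z) + 4*(y*z*z*z) + 4*(x*x*x*y*y) + 8*(x*x*x*y*z) + 4*(x*x*x*z*z) + 4*(x*x*y*y*y) + 8*(x*x*y*y*z) + 8*(x*x*y*z*z) + 4*(x*x*z*z*z) + 8*(x*y*y*y*z) + 8*(x*y*y*z*z) + 8*(x*y*z*z*z) + 4*(y*y*y*z*z) + 4*(y*y*z*z*z) + 4*(x*x*x*y*y*y) + 8*(x*x*x*y*y*z) + 8*(x*x*x*y*z*z) + 4*(x*x*x*z*z*z) + 8*(x*x*y*y*y*z) + 8*(x*x*y*y*z*z) + 8*(x*x*y*z*z*z) + 8*(x*y*y*y*z*z) + 8*(x*y*y*z*z*z) + 4*(y*y*y*z*z*z) + 8*(x*x*x*y*y*y*z) + 8*(x*x*x*y*y*z*z) + 8*(x*x*x*y*z*z*z) + 8*(x*x*y*y*y*z*z) + 8*(x*x*y*y*z*z*z)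 + 8*(x*y*y*y*z*z*z) + 8*(x*x*x*y*y*y*z*z) + 8*(x*x*x*y*y*z*z*z) + 8*(x*x*y*y*y*z*z*z) + 8*(x*x*x*y*y*y*z*z*z)
def tauE (x y z : R) : R := 2*(x+y+z) + 2*(x*y+x*z+y*z - y*x - z*x - z*y)
  + 2*((x*y-y*x)*z - z*(x*y-y*x)) - 2*(x*z*y + y*z*x)
  - 2*(x*y*x + x*z*x + y*x*y + y*z*y + z*x*z + z*y*z)

set_option maxHeartbeats 1000000 in
theorem sExpand (x y z : R) : sE x * sE y * sE z
    = 1 + rho1E x y z + QE x y z + KE x y z + GE x y z := by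
  simp only [sE, rho1E, QE, KE, GE]
  noncomm_ring

set_option maxHeartbeats 2000000 in
theorem keyIdent (x y z : R) :
    8*(rho1E x y z + QE x y z + KE x y z)
      - 4*((rho1E x y z + QE x y z)*(rho1E x y z + QE x y z))
      + 2*(rho1E x y z*(rho1E x y z*rho1E x y z))
      + 4*(QE x y z*QE x y z)
    = 8*tauE x y z := by
  simp only [rho1E, QE, KE, tauE]
  noncomm_ring

end RingDefs

lemma ev_abs_le {ε : ℝ} (hε : 0 < ε) : ∀ᶠ t : ℝ in nhds 0, |t| ≤ ε := by
  filter_upwards [Metric.eventually_nhds_iff.mpr ⟨ε, hε, fun y hy => le_of_lt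
    (by simpa [Real.dist_eq] using hy)⟩] with t ht using ht

lemma hpow_le {m k : ℕ} (h : m ≤ k) : (fun t : ℝ => t^k) =O[nhds 0] fun t => t^m := by
  refine IsBigO.of_bound 1 ?_
  filter_upwards [ev_abs_le one_pos] with t ht
  simp only [Real.norm_eq_abs, abs_pow, one_mul]
  exact pow_le_pow_of_le_one (abs_nonneg t) ht h

lemma pow_O_one (k : ℕ) : (fun t : ℝ => t^k) =O[nhds 0] fun _ => (1:ℝ) := by
  refine IsBigO.of_bound 1 ?_
  filter_upwards [ev_abs_le one_pos] with t ht
  simp only [Real.norm_eq_abs, abs_pow, norm_one, one_mul]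
  exact pow_le_one₀ (abs_nonneg t) ht

section MatrixPart
variable {n : ℕ}
local notation "𝕄" => Matrix (Fin n) (Fin n) ℂ

lemma hmulO {f g : ℝ → 𝕄} {i j k : ℕ} (hf : f =O[nhds 0] fun t => t^i)
    (hg : g =O[nhds 0] fun t => t^j) (hk : i + j = k) :
    (fun t => f t * g t) =O[nhds 0] fun t : ℝ => t^k := by
  subst hk
  simpa [pow_add] using hf.mul hg

lemma smulO {f : ℝ → 𝕄} {g : ℝ → ℝ} (h : f =O[nhds 0] g) (c : ℂ) :
    (fun t => c • f t) =O[nhds 0] g := by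
  exact h.const_smul_left c

lemma unsmulO {f : ℝ → 𝕄} {g : ℝ → ℝ} (h : (fun t => (8:ℂ) • f t) =O[nhds 0] g) :
    f =O[nhds 0] g := by
  refine (smulO h ((8:ℂ)⁻¹)).congr_left fun t => ?_
  rw [smul_smul]
  norm_num

lemma inv_bound (M : 𝕄) (h : ‖M‖ ≤ 1/2) :
    IsUnit (1 - M) ∧ ‖(1 - M)⁻¹‖ ≤ 2 * ‖(1:𝕄)‖ := by
  have hu : IsUnit (1 - M) := ⟨Units.oneSub M (lt_of_le_of_lt h (by norm_num)), rfl⟩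
  refine ⟨hu, ?_⟩
  have hmul : (1 - M) * (1 - M)⁻¹ = 1 :=
    Matrix.mul_nonsing_inv _ ((Matrix.isUnit_iff_isUnit_det _).mp hu)
  have hVeq : (1 - M)⁻¹ = 1 + M * (1 - M)⁻¹ := by
    have h2 := hmul
    rw [sub_mul, one_mul, sub_eq_iff_eq_add] at h2
    exact h2
  have h1 : ‖(1 - M)⁻¹‖ ≤ ‖(1:𝕄)‖ + ‖M‖ * ‖(1 - M)⁻¹‖ :=
    hVeq ▸ le_trans (norm_add_le _ _) (by gcongr; · rw [← hVeq]; exact norm_mul_le _ _)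
  nlinarith [norm_nonneg ((1 - M)⁻¹), norm_nonneg M, norm_nonneg (1:𝕄)]

lemma cay_err (M : 𝕄) (h : ‖M‖ ≤ 1/2) :
    ‖(1 - M)⁻¹ * (1 + M) - sE M‖ ≤ (4 * ‖(1:𝕄)‖) * ‖M‖^4 := by
  obtain ⟨hu, hb⟩ := inv_bound M h
  have hinv : (1 - M)⁻¹ * (1 - M) = 1 :=
    Matrix.nonsing_inv_mul _ ((Matrix.isUnit_iff_isUnit_det _).mp hu)
  have key : (1 - M) * sE M = (1 + M) - 2*(M*(M*(M*M))) := by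
    simp only [sE]; noncomm_ring
  have hEq : (1 - M)⁻¹ * (1 + M) - sE M = (1 - M)⁻¹ * (2*(M*(M*(M*M)))) := by
    calc (1 - M)⁻¹ * (1 + M) - sE M
        = (1 - M)⁻¹ * (1 + M) - ((1 - M)⁻¹ * (1 - M)) * sE M := by rw [hinv, one_mul]
      _ = (1 - M)⁻¹ * ((1 + M) - (1 - M) * sE M) := by rw [mul_assoc, ← mul_sub]
      _ = (1 - M)⁻¹ * (2*(M*(M*(M*M)))) := by rw [key]; congr 1; abel
  rw [hEq]
  calc ‖(1 - M)⁻¹ * (2*(M*(M*(M*M))))‖ ≤ ‖(1 - M)⁻¹‖ * ‖2*(M*(M*(M*M)))‖ := norm_mul_le _ _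
    _ ≤ (2*‖(1:𝕄)‖) * (2 * ‖M‖^4) := by
        refine mul_le_mul hb ?_ (norm_nonneg _) (by positivity)
        have h2 : (2:𝕄)*(M*(M*(M*M))) = M*(M*(M*M)) + M*(M*(M*M)) := two_mul _
        rw [h2]
        refine le_trans (norm_add_le _ _) ?_
        have hm : ‖M*(M*(M*M))‖ ≤ ‖M‖^4 := by
          calc ‖M*(M*(M*M))‖ ≤ ‖M‖*(‖M‖*(‖M‖*‖M‖)) := by
                refine le_trans (norm_mul_le _ _) ?_
                gcongr
                refine le_trans (norm_mul_le _ _) ?_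
                gcongr
                exact norm_mul_le _ _
            _ = ‖M‖^4 := by ring
        linarith
    _ = (4 * ‖(1:𝕄)‖) * ‖M‖^4 := by ring

lemma two_mul_smul (m : 𝕄) : (2:𝕄) * m = (2:ℂ) • m := by
  rw [two_mul, two_smul]

lemma four_mul_smul (m : 𝕄) : (4:𝕄) * m = (4:ℂ) • m := by
  have h : (4:𝕄) = 2 + 2 := by norm_num
  rw [h, add_mul, two_mul_smul, ← add_smul]
  norm_num

lemma eight_mul_smul (m : 𝕄) : (8:𝕄) * m = (8:ℂ) • m := by
  have h : (8:𝕄) = 4 + 4 := by norm_num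
  rw [h, add_mul, four_mul_smul, ← add_smul]
  norm_num

lemma key_smul (x y z : 𝕄) :
    (8:ℂ)•(rho1E x y z + QE x y z + KE x y z)
      - (4:ℂ)•((rho1E x y z + QE x y z)*(rho1E x y z + QE x y z))
      + (2:ℂ)•(rho1E x y z*(rho1E x y z*rho1E x y z))
      - (8:ℂ)•tauE x y z
    = -((4:ℂ)•(QE x y z * QE x y z)) := by
  rw [← eight_mul_smul, ← four_mul_smul, ← two_mul_smul, ← eight_mul_smul, ← four_mul_smul,
    ← keyIdent x y z]
  abel

end MatrixPart
section MatrixPart2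
variable {n : ℕ}
local notation "𝕄" => Matrix (Fin n) (Fin n) ℂ

lemma V_props (Pt : 𝕄) (h : ‖Pt - 1‖ ≤ 1/2) :
    IsUnit (1 + Pt) ∧ ‖(2:ℂ)•(1+Pt)⁻¹‖ ≤ 2*‖(1:𝕄)‖ ∧
    (2:ℂ)•(1+Pt)⁻¹ = 1 - (1/2:ℂ)•((Pt-1)*((2:ℂ)•(1+Pt)⁻¹)) := by
  have hu1 : IsUnit ((1:𝕄) - (-(1/2:ℂ))•(Pt-1)) := by
    refine (inv_bound _ ?_).1
    rw [norm_smul]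
    have h2 : ‖(-(1/2):ℂ)‖ = 1/2 := by norm_num
    rw [h2]
    nlinarith [norm_nonneg (Pt - 1)]
  have hu2 : IsUnit ((2:ℂ)•(1:𝕄)) := by
    rw [Matrix.isUnit_iff_isUnit_det, Matrix.det_smul, Matrix.det_one, mul_one]
    exact (isUnit_iff_ne_zero).mpr (pow_ne_zero _ (by norm_num))
  have heq : (1:𝕄) + Pt = ((2:ℂ)•(1:𝕄)) * ((1:𝕄) - (-(1/2:ℂ))•(Pt-1)) := by
    rw [smul_mul_assoc, one_mul]
    module
  have hu : IsUnit ((1:𝕄) + Pt) := heq ▸ hu2.mul hu1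
  have hr : ((1:𝕄) + Pt) * (1+Pt)⁻¹ = 1 :=
    Matrix.mul_nonsing_inv _ ((Matrix.isUnit_iff_isUnit_det _).mp hu)
  have hVrec : (2:ℂ)•(1+Pt)⁻¹ = 1 - (1/2:ℂ)•((Pt-1)*((2:ℂ)•(1+Pt)⁻¹)) := by
    have e1 : (1/2:ℂ)*2 = 1 := by norm_num
    rw [mul_smul_comm, smul_smul, e1, one_smul, eq_sub_iff_add_eq]
    have e2 : (2:ℂ)•(1+Pt)⁻¹ + (Pt-1)*(1+Pt)⁻¹ = ((1:𝕄)+Pt)*(1+Pt)⁻¹ := by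
      rw [two_smul]; noncomm_ring
    rw [e2, hr]
  refine ⟨hu, ?_, hVrec⟩
  have hb : ‖(2:ℂ)•(1+Pt)⁻¹‖ ≤ ‖(1:𝕄)‖ + (1/2) * (‖Pt-1‖ * ‖(2:ℂ)•(1+Pt)⁻¹‖) := by
    calc ‖(2:ℂ)•(1+Pt)⁻¹‖ = ‖1 - (1/2:ℂ)•((Pt-1)*((2:ℂ)•(1+Pt)⁻¹))‖ := by rw [← hVrec]
      _ ≤ ‖(1:𝕄)‖ + ‖(1/2:ℂ)•((Pt-1)*((2:ℂ)•(1+Pt)⁻¹))‖ := norm_sub_le _ _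
      _ ≤ ‖(1:𝕄)‖ + (1/2) * (‖Pt-1‖ * ‖(2:ℂ)•(1+Pt)⁻¹‖) := by
          rw [norm_smul]
          gcongr
          · norm_num
          · exact norm_mul_le _ _
  nlinarith [norm_nonneg ((2:ℂ)•(1+Pt)⁻¹), norm_nonneg (Pt-1), norm_nonneg (1:𝕄)]

lemma cayley_inv (Pt Ω : 𝕄) (hu : IsUnit ((1:𝕄) + Pt))
    (hΩ : Ω = (2:ℂ)•((Pt-1)*(1+Pt)⁻¹)) :
    (1 - (1/2:ℂ)•Ω)⁻¹ * (1 + (1/2:ℂ)•Ω) = Pt := by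
  have hdet := (Matrix.isUnit_iff_isUnit_det _).mp hu
  have hr : ((1:𝕄) + Pt) * (1+Pt)⁻¹ = 1 := Matrix.mul_nonsing_inv _ hdet
  have hl : (1+Pt)⁻¹ * ((1:𝕄) + Pt) = 1 := Matrix.nonsing_inv_mul _ hdet
  have h1 : (1/2:ℂ)•Ω = (Pt-1)*(1+Pt)⁻¹ := by rw [hΩ, smul_smul]; norm_num
  have h2 : (1:𝕄) - (1/2:ℂ)•Ω = (1+Pt)⁻¹ + (1+Pt)⁻¹ := by
    rw [h1, sub_eq_iff_eq_add, eq_comm]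
    have e2 : (1+Pt)⁻¹ + (1+Pt)⁻¹ + (Pt-1)*(1+Pt)⁻¹ = ((1:𝕄)+Pt)*(1+Pt)⁻¹ := by noncomm_ring
    rw [e2, hr]
  have h3 : (1:𝕄) + (1/2:ℂ)•Ω = (Pt + Pt) * (1+Pt)⁻¹ := by
    rw [h1]
    have e3 : (Pt+Pt)*(1+Pt)⁻¹ = ((1:𝕄)+Pt)*(1+Pt)⁻¹ + (Pt-1)*(1+Pt)⁻¹ := by noncomm_ring
    rw [e3, hr]
  have h4 : ((1:𝕄) - (1/2:ℂ)•Ω)⁻¹ = (1/2:ℂ)•((1:𝕄)+Pt) := by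
    refine Matrix.inv_eq_right_inv ?_
    rw [h2, mul_smul_comm]
    have e4 : ((1+Pt)⁻¹ + (1+Pt)⁻¹) * ((1:𝕄)+Pt)
        = (1+Pt)⁻¹ * ((1:𝕄)+Pt) + (1+Pt)⁻¹ * ((1:𝕄)+Pt) := by noncomm_ring
    rw [e4, hl]
    module
  have h5 : ((1:𝕄)+Pt) * ((Pt + Pt) * (1+Pt)⁻¹) = (Pt+Pt) * (((1:𝕄)+Pt) * (1+Pt)⁻¹) := by
    rw [← mul_assoc, ← mul_assoc]
    congr 1
    noncomm_ring
  rw [h4, h3, smul_mul_assoc, h5, hr, mul_one]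
  module

end MatrixPart2
section MatrixPart3
variable {n : ℕ}
local notation "𝕄" => Matrix (Fin n) (Fin n) ℂ

lemma aF_norm (A : 𝕄) (t : ℝ) : ‖((t:ℂ)/2)•A‖ = |t|/2*‖A‖ := by
  rw [norm_smul, norm_div, Complex.norm_real, Real.norm_eq_abs]
  norm_num

lemma ev_small (A : 𝕄) : ∀ᶠ t : ℝ in nhds 0, ‖((t:ℂ)/2)•A‖ ≤ 1/2 := by
  filter_upwards [ev_abs_le (show (0:ℝ) < (‖A‖+1)⁻¹ by positivity)] with t ht
  rw [aF_norm]
  have h1 : |t| * ‖A‖ ≤ (‖A‖+1)⁻¹ * (‖A‖+1) :=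
    mul_le_mul ht (by linarith [norm_nonneg A]) (norm_nonneg A) (by positivity)
  rw [inv_mul_cancel₀ (by positivity)] at h1
  linarith

lemma aF_O (A : 𝕄) : (fun t : ℝ => ((t:ℂ)/2)•A) =O[nhds 0] fun t => t^1 := by
  refine IsBigO.of_bound (‖A‖/2) (Eventually.of_forall fun t => ?_)
  rw [aF_norm, pow_one, Real.norm_eq_abs]
  nlinarith [abs_nonneg t, norm_nonneg A]

lemma cay_sub_O (A : 𝕄) :
    (fun t : ℝ => (1 - ((t:ℂ)/2)•A)⁻¹ * (1 + ((t:ℂ)/2)•A) - sE (((t:ℂ)/2)•A))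
      =O[nhds 0] fun t => t^4 := by
  refine IsBigO.of_bound ((4*‖(1:𝕄)‖) * (‖A‖/2)^4) ?_
  filter_upwards [ev_small A] with t ht
  refine le_trans (cay_err _ ht) ?_
  rw [aF_norm, Real.norm_eq_abs, abs_pow]
  refine le_of_eq (by ring)

lemma s_O_one (A : 𝕄) :
    (fun t : ℝ => sE (((t:ℂ)/2)•A)) =O[nhds 0] fun _ => (1:ℝ) := by
  have hc : Continuous fun t : ℝ => ((t:ℂ)/2)•A :=
    (Complex.continuous_ofReal.div_const 2).smul continuous_const
  have hs : Continuous fun t : ℝ => sE (((t:ℂ)/2)•A) := by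
    simp only [sE]
    exact ((continuous_const.add (continuous_const.mul hc)).add
      (continuous_const.mul (hc.mul hc))).add (continuous_const.mul ((hc.mul hc).mul hc))
  exact Filter.Tendsto.isBigO_one ℝ (hs.tendsto 0)

lemma tele3 {R : Type*} [Ring R] (ca cb cc sa sb sc : R) :
    (ca - sa)*(cb*cc) + sa*((cb - sb)*cc) + (sa*sb)*(cc - sc) = ca*cb*cc - sa*sb*sc := by
  noncomm_ring

lemma cay_O_one (A : 𝕄) :
    (fun t : ℝ => (1 - ((t:ℂ)/2)•A)⁻¹ * (1 + ((t:ℂ)/2)•A)) =O[nhds 0] fun _ => (1:ℝ) := by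
  have h := ((cay_sub_O A).trans (pow_O_one 4)).add (s_O_one A)
  exact h.congr_left fun t => by abel

lemma prod_sub_O (A B C : 𝕄) :
    (fun t : ℝ =>
      ((1 - ((t:ℂ)/2)•A)⁻¹ * (1 + ((t:ℂ)/2)•A)) *
      ((1 - ((t:ℂ)/2)•B)⁻¹ * (1 + ((t:ℂ)/2)•B)) *
      ((1 - ((t:ℂ)/2)•C)⁻¹ * (1 + ((t:ℂ)/2)•C))
      - sE (((t:ℂ)/2)•A) * sE (((t:ℂ)/2)•B) * sE (((t:ℂ)/2)•C))
      =O[nhds 0] fun t => t^4 := by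
  have h1 : (fun t : ℝ =>
      ((1 - ((t:ℂ)/2)•A)⁻¹ * (1 + ((t:ℂ)/2)•A) - sE (((t:ℂ)/2)•A)) *
      (((1 - ((t:ℂ)/2)•B)⁻¹ * (1 + ((t:ℂ)/2)•B)) * ((1 - ((t:ℂ)/2)•C)⁻¹ * (1 + ((t:ℂ)/2)•C))))
      =O[nhds 0] fun t => t^4 := by
    simpa using (cay_sub_O A).mul ((cay_O_one B).mul (cay_O_one C))
  have h2 : (fun t : ℝ =>
      sE (((t:ℂ)/2)•A) *
      (((1 - ((t:ℂ)/2)•B)⁻¹ * (1 + ((t:ℂ)/2)•B) - sE (((t:ℂ)/2)•B)) *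
       ((1 - ((t:ℂ)/2)•C)⁻¹ * (1 + ((t:ℂ)/2)•C))))
      =O[nhds 0] fun t => t^4 := by
    simpa using (s_O_one A).mul ((cay_sub_O B).mul (cay_O_one C))
  have h3 : (fun t : ℝ =>
      (sE (((t:ℂ)/2)•A) * sE (((t:ℂ)/2)•B)) *
      ((1 - ((t:ℂ)/2)•C)⁻¹ * (1 + ((t:ℂ)/2)•C) - sE (((t:ℂ)/2)•C)))
      =O[nhds 0] fun t => t^4 := by
    simpa using ((s_O_one A).mul (s_O_one B)).mul (cay_sub_O C)
  exact ((h1.add h2).add h3).congr_left fun t => tele3 _ _ _ _ _ _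

lemma rho1_O {x y z : ℝ → 𝕄} (hx : x =O[nhds 0] fun t : ℝ => t^1)
    (hy : y =O[nhds 0] fun t : ℝ => t^1) (hz : z =O[nhds 0] fun t : ℝ => t^1) :
    (fun t => rho1E (x t) (y t) (z t)) =O[nhds 0] fun t : ℝ => t^1 := by
  simp only [rho1E]
  exact ((hx.add hy).add hz).const_mul_left _

lemma Q_O {x y z : ℝ → 𝕄} (hx : x =O[nhds 0] fun t : ℝ => t^1)
    (hy : y =O[nhds 0] fun t : ℝ => t^1) (hz : z =O[nhds 0] fun t : ℝ => t^1) :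
    (fun t => QE (x t) (y t) (z t)) =O[nhds 0] fun t : ℝ => t^2 := by
  simp only [QE]
  exact ((((hmulO hx hx rfl).add (hmulO hy hy rfl)).add (hmulO hz hz rfl)).const_mul_left _).add
    ((((hmulO hx hy rfl).add (hmulO hx hz rfl)).add (hmulO hy hz rfl)).const_mul_left _)

lemma K_O {x y z : ℝ → 𝕄} (hx : x =O[nhds 0] fun t : ℝ => t^1)
    (hy : y =O[nhds 0] fun t : ℝ => t^1) (hz : z =O[nhds 0] fun t : ℝ => t^1) :
    (fun t => KE (x t) (y t) (z t)) =O[nhds 0] fun t : ℝ => t^3 := by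
  simp only [KE]
  refine ((?_ : _ =O[nhds 0] fun t : ℝ => t^3).add ((?_ : _ =O[nhds 0] fun t : ℝ => t^3).const_mul_left _)).add
    ((hmulO (hmulO hx hy rfl) hz rfl).const_mul_left _)
  · exact (((hmulO (hmulO hx hx rfl) hx rfl).add (hmulO (hmulO hy hy rfl) hy rfl)).add
      (hmulO (hmulO hz hz rfl) hz rfl)).const_mul_left _
  · exact (((((hmulO (hmulO hx hx rfl) hy rfl).add (hmulO (hmulO hx hx rfl) hz rfl)).add
      (hmulO (hmulO hx hy rfl) hy rfl)).add (hmulO (hmulO hx hz rfl) hz rfl)).add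
      (hmulO (hmulO hy hy rfl) hz rfl)).add (hmulO (hmulO hy hz rfl) hz rfl)

lemma tau_subst (t : ℝ) (A B C : 𝕄) :
    (t:ℂ) • (A + B + C)
      + ((t:ℂ)^2/2) • ((A*B - B*A) + (A*C - C*A) + (B*C - C*B))
      + (t:ℂ)^3 • ((1/4 : ℂ) • ((A*B - B*A)*C - C*(A*B - B*A))
        - (1/4 : ℂ) • (A*C*B + B*C*A)
        - (1/4 : ℂ) • (A*B*A + A*C*A + B*A*B + B*C*B + C*A*C + C*B*C))
    = tauE (((t:ℂ)/2)•A) (((t:ℂ)/2)•B) (((t:ℂ)/2)•C) := by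
  simp only [tauE, smul_mul_assoc, mul_smul_comm, smul_smul, two_mul, smul_sub, smul_add,
    sub_mul, mul_sub, add_mul, mul_add]
  module

end MatrixPart3
section MatrixPart4
variable {n : ℕ}
local notation "𝕄" => Matrix (Fin n) (Fin n) ℂ


lemma G_O {x y z : ℝ → 𝕄} (hx : x =O[nhds 0] fun t : ℝ => t^1)
    (hy : y =O[nhds 0] fun t : ℝ => t^1) (hz : z =O[nhds 0] fun t : ℝ => t^1) :
    (fun t => GE (x t) (y t) (z t)) =O[nhds 0] fun t : ℝ => t^4 := by
  simp only [GE]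
  exact (((((((((((((((((((((((((((((((((((((((((((((((hmulO (hmulO (hmulO hx hx rfl) hx rfl) hy rfl)).trans (hpow_le (m := 4) (by norm_num))).const_mul_left _).add
    ((((hmulO (hmulO (hmulO hx hx rfl) hx rfl) hz rfl)).trans (hpow_le (m := 4) (by norm_num))).const_mul_left _)).add
    ((((hmulO (hmulO (hmulO hx hx rfl) hy rfl) hy rfl)).trans (hpow_le (m := 4) (by norm_num))).const_mul_left _)).add
    ((((hmulO (hmulO (hmulO hx hx rfl) hy rfl) hz rfl)).trans (hpow_le (m := 4) (by norm_num))).const_mul_left _)).add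
    ((((hmulO (hmulO (hmulO hx hx rfl) hz rfl) hz rfl)).trans (hpow_le (m := 4) (by norm_num))).const_mul_left _)).add
    ((((hmulO (hmulO (hmulO hx hy rfl) hy rfl) hy rfl)).trans (hpow_le (m := 4) (by norm_num))).const_mul_left _)).add
    ((((hmulO (hmulO (hmulO hx hy rfl) hy rfl) hz rfl)).trans (hpow_le (m := 4) (by norm_num))).const_mul_left _)).add
    ((((hmulO (hmulO (hmulO hx hy rfl) hz rfl) hz rfl)).trans (hpow_le (m := 4) (by norm_num))).const_mul_left _)).add
    ((((hmulO (hmulO (hmulO hx hz rfl) hz rfl) hz rfl)).trans (hpow_le (m := 4) (by norm_num))).const_mul_left _)).add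
    ((((hmulO (hmulO (hmulO hy hy rfl) hy rfl) hz rfl)).trans (hpow_le (m := 4) (by norm_num))).const_mul_left _)).add
    ((((hmulO (hmulO (hmulO hy hy rfl) hz rfl) hz rfl)).trans (hpow_le (m := 4) (by norm_num))).const_mul_left _)).add
    ((((hmulO (hmulO (hmulO hy hz rfl) hz rfl) hz rfl)).trans (hpow_le (m := 4) (by norm_num))).const_mul_left _)).add
    ((((hmulO (hmulO (hmulO (hmulO hx hx rfl) hx rfl) hy rfl) hy rfl)).trans (hpow_le (m := 4) (by norm_num))).const_mul_left _)).add
    ((((hmulO (hmulO (hmulO (hmulO hx hx rfl) hx rfl) hy rfl) hz rfl)).trans (hpow_le (m := 4) (by norm_num))).const_mul_left _)).add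
    ((((hmulO (hmulO (hmulO (hmulO hx hx rfl) hx rfl) hz rfl) hz rfl)).trans (hpow_le (m := 4) (by norm_num))).const_mul_left _)).add
    ((((hmulO (hmulO (hmulO (hmulO hx hx rfl) hy rfl) hy rfl) hy rfl)).trans (hpow_le (m := 4) (by norm_num))).const_mul_left _)).add
    ((((hmulO (hmulO (hmulO (hmulO hx hx rfl) hy rfl) hy rfl) hz rfl)).trans (hpow_le (m := 4) (by norm_num))).const_mul_left _)).add
    ((((hmulO (hmulO (hmulO (hmulO hx hx rfl) hy rfl) hz rfl) hz rfl)).trans (hpow_le (m := 4) (by norm_num))).const_mul_left _)).add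
    ((((hmulO (hmulO (hmulO (hmulO hx hx rfl) hz rfl) hz rfl) hz rfl)).trans (hpow_le (m := 4) (by norm_num))).const_mul_left _)).add
    ((((hmulO (hmulO (hmulO (hmulO hx hy rfl) hy rfl) hy rfl) hz rfl)).trans (hpow_le (m := 4) (by norm_num))).const_mul_left _)).add
    ((((hmulO (hmulO (hmulO (hmulO hx hy rfl) hy rfl) hz rfl) hz rfl)).trans (hpow_le (m := 4) (by norm_num))).const_mul_left _)).add
    ((((hmulO (hmulO (hmulO (hmulO hx hy rfl) hz rfl) hz rfl) hz rfl)).trans (hpow_le (m := 4) (by norm_num))).const_mul_left _)).add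
    ((((hmulO (hmulO (hmulO (hmulO hy hy rfl) hy rfl) hz rfl) hz rfl)).trans (hpow_le (m := 4) (by norm_num))).const_mul_left _)).add
    ((((hmulO (hmulO (hmulO (hmulO hy hy rfl) hz rfl) hz rfl) hz rfl)).trans (hpow_le (m := 4) (by norm_num))).const_mul_left _)).add
    ((((hmulO (hmulO (hmulO (hmulO (hmulO hx hx rfl) hx rfl) hy rfl) hy rfl) hy rfl)).trans (hpow_le (m := 4) (by norm_num))).const_mul_left _)).add
    ((((hmulO (hmulO (hmulO (hmulO (hmulO hx hx rfl) hx rfl) hy rfl) hy rfl) hz rfl)).trans (hpow_le (m := 4) (by norm_num))).const_mul_left _)).add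
    ((((hmulO (hmulO (hmulO (hmulO (hmulO hx hx rfl) hx rfl) hy rfl) hz rfl) hz rfl)).trans (hpow_le (m := 4) (by norm_num))).const_mul_left _)).add
    ((((hmulO (hmulO (hmulO (hmulO (hmulO hx hx rfl) hx rfl) hz rfl) hz rfl) hz rfl)).trans (hpow_le (m := 4) (by norm_num))).const_mul_left _)).add
    ((((hmulO (hmulO (hmulO (hmulO (hmulO hx hx rfl) hy rfl) hy rfl) hy rfl) hz rfl)).trans (hpow_le (m := 4) (by norm_num))).const_mul_left _)).add
    ((((hmulO (hmulO (hmulO (hmulO (hmulO hx hx rfl) hy rfl) hy rfl) hz rfl) hz rfl)).trans (hpow_le (m := 4) (by norm_num))).const_mul_left _)).add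
    ((((hmulO (hmulO (hmulO (hmulO (hmulO hx hx rfl) hy rfl) hz rfl) hz rfl) hz rfl)).trans (hpow_le (m := 4) (by norm_num))).const_mul_left _)).add
    ((((hmulO (hmulO (hmulO (hmulO (hmulO hx hy rfl) hy rfl) hy rfl) hz rfl) hz rfl)).trans (hpow_le (m := 4) (by norm_num))).const_mul_left _)).add
    ((((hmulO (hmulO (hmulO (hmulO (hmulO hx hy rfl) hy rfl) hz rfl) hz rfl) hz rfl)).trans (hpow_le (m := 4) (by norm_num))).const_mul_left _)).add
    ((((hmulO (hmulO (hmulO (hmulO (hmulO hy hy rfl) hy rfl) hz rfl) hz rfl) hz rfl)).trans (hpow_le (m := 4) (by norm_num))).const_mul_left _)).add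
    ((((hmulO (hmulO (hmulO (hmulO (hmulO (hmulO hx hx rfl) hx rfl) hy rfl) hy rfl) hy rfl) hz rfl)).trans (hpow_le (m := 4) (by norm_num))).const_mul_left _)).add
    ((((hmulO (hmulO (hmulO (hmulO (hmulO (hmulO hx hx rfl) hx rfl) hy rfl) hy rfl) hz rfl) hz rfl)).trans (hpow_le (m := 4) (by norm_num))).const_mul_left _)).add
    ((((hmulO (hmulO (hmulO (hmulO (hmulO (hmulO hx hx rfl) hx rfl) hy rfl) hz rfl) hz rfl) hz rfl)).trans (hpow_le (m := 4) (by norm_num))).const_mul_left _)).add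
    ((((hmulO (hmulO (hmulO (hmulO (hmulO (hmulO hx hx rfl) hy rfl) hy rfl) hy rfl) hz rfl) hz rfl)).trans (hpow_le (m := 4) (by norm_num))).const_mul_left _)).add
    ((((hmulO (hmulO (hmulO (hmulO (hmulO (hmulO hx hx rfl) hy rfl) hy rfl) hz rfl) hz rfl) hz rfl)).trans (hpow_le (m := 4) (by norm_num))).const_mul_left _)).add
    ((((hmulO (hmulO (hmulO (hmulO (hmulO (hmulO hx hy rfl) hy rfl) hy rfl) hz rfl) hz rfl) hz rfl)).trans (hpow_le (m := 4) (by norm_num))).const_mul_left _)).add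
    ((((hmulO (hmulO (hmulO (hmulO (hmulO (hmulO (hmulO hx hx rfl) hx rfl) hy rfl) hy rfl) hy rfl) hz rfl) hz rfl)).trans (hpow_le (m := 4) (by norm_num))).const_mul_left _)).add
    ((((hmulO (hmulO (hmulO (hmulO (hmulO (hmulO (hmulO hx hx rfl) hx rfl) hy rfl) hy rfl) hz rfl) hz rfl) hz rfl)).trans (hpow_le (m := 4) (by norm_num))).const_mul_left _)).add
    ((((hmulO (hmulO (hmulO (hmulO (hmulO (hmulO (hmulO hx hx rfl) hy rfl) hy rfl) hy rfl) hz rfl) hz rfl) hz rfl)).trans (hpow_le (m := 4) (by norm_num))).const_mul_left _)).add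
    ((((hmulO (hmulO (hmulO (hmulO (hmulO (hmulO (hmulO (hmulO hx hx rfl) hx rfl) hy rfl) hy rfl) hy rfl) hz rfl) hz rfl) hz rfl)).trans (hpow_le (m := 4) (by norm_num))).const_mul_left _))

end MatrixPart4
section MainPart
variable {n : ℕ}
local notation "𝕄" => Matrix (Fin n) (Fin n) ℂ

lemma tele2 {R : Type*} [Ring R] (r ρ : R) :
    r*(r - ρ) + (r - ρ)*ρ = r*r - ρ*ρ := by noncomm_ring

lemma tele3c {R : Type*} [Ring R] (r ρ : R) :
    (r - ρ)*(r*r) + ρ*((r - ρ)*r) + ρ*(ρ*(r - ρ)) = r*(r*r) - ρ*(ρ*ρ) := by noncomm_ring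

lemma R_sub_O (A B C : Matrix (Fin n) (Fin n) ℂ) (P Ωf : ℝ → Matrix (Fin n) (Fin n) ℂ)
    (hP : ∀ t : ℝ, P t =
      (1 - ((t:ℂ)/2) • A)⁻¹ * (1 + ((t:ℂ)/2) • A) *
      ((1 - ((t:ℂ)/2) • B)⁻¹ * (1 + ((t:ℂ)/2) • B)) *
      ((1 - ((t:ℂ)/2) • C)⁻¹ * (1 + ((t:ℂ)/2) • C)))
    (hΩ : ∀ t : ℝ, Ωf t = (2:ℂ) • ((P t - 1) * (1 + P t)⁻¹)) :
    (fun t : ℝ => (P t - 1) -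
      (rho1E (((t:ℂ)/2)•A) (((t:ℂ)/2)•B) (((t:ℂ)/2)•C)
        + QE (((t:ℂ)/2)•A) (((t:ℂ)/2)•B) (((t:ℂ)/2)•C)
        + KE (((t:ℂ)/2)•A) (((t:ℂ)/2)•B) (((t:ℂ)/2)•C)))
      =O[nhds 0] fun t => t^4 := by
  have hprod := prod_sub_O A B C
  have hG := G_O (aF_O A) (aF_O B) (aF_O C)
  refine (hprod.add hG).congr_left fun t => ?_
  rw [hP t, sExpand (((t:ℂ)/2)•A) (((t:ℂ)/2)•B) (((t:ℂ)/2)•C)]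
  abel

lemma R_O (A B C : Matrix (Fin n) (Fin n) ℂ) (P Ωf : ℝ → Matrix (Fin n) (Fin n) ℂ)
    (hP : ∀ t : ℝ, P t =
      (1 - ((t:ℂ)/2) • A)⁻¹ * (1 + ((t:ℂ)/2) • A) *
      ((1 - ((t:ℂ)/2) • B)⁻¹ * (1 + ((t:ℂ)/2) • B)) *
      ((1 - ((t:ℂ)/2) • C)⁻¹ * (1 + ((t:ℂ)/2) • C)))
    (hΩ : ∀ t : ℝ, Ωf t = (2:ℂ) • ((P t - 1) * (1 + P t)⁻¹)) : (fun t : ℝ => P t - 1) =O[nhds 0] fun t => t^1 := by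
  have h3 : (fun t : ℝ => rho1E (((t:ℂ)/2)•A) (((t:ℂ)/2)•B) (((t:ℂ)/2)•C)
        + QE (((t:ℂ)/2)•A) (((t:ℂ)/2)•B) (((t:ℂ)/2)•C)
        + KE (((t:ℂ)/2)•A) (((t:ℂ)/2)•B) (((t:ℂ)/2)•C)) =O[nhds 0] fun t => t^1 :=
    ((rho1_O (aF_O A) (aF_O B) (aF_O C)).add
      ((Q_O (aF_O A) (aF_O B) (aF_O C)).trans (hpow_le (by norm_num)))).add
      ((K_O (aF_O A) (aF_O B) (aF_O C)).trans (hpow_le (by norm_num)))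
  exact (((R_sub_O A B C P Ωf hP hΩ).trans (hpow_le (by norm_num))).add h3).congr_left
    fun t => by abel

lemma ev_Rsmall (A B C : Matrix (Fin n) (Fin n) ℂ) (P Ωf : ℝ → Matrix (Fin n) (Fin n) ℂ)
    (hP : ∀ t : ℝ, P t =
      (1 - ((t:ℂ)/2) • A)⁻¹ * (1 + ((t:ℂ)/2) • A) *
      ((1 - ((t:ℂ)/2) • B)⁻¹ * (1 + ((t:ℂ)/2) • B)) *
      ((1 - ((t:ℂ)/2) • C)⁻¹ * (1 + ((t:ℂ)/2) • C)))
    (hΩ : ∀ t : ℝ, Ωf t = (2:ℂ) • ((P t - 1) * (1 + P t)⁻¹)) : ∀ᶠ t : ℝ in nhds 0, ‖P t - 1‖ ≤ 1/2 := by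
  obtain ⟨c0, hc0⟩ := (R_O A B C P Ωf hP hΩ).bound
  filter_upwards [hc0, ev_abs_le (show (0:ℝ) < (2*(|c0|+1))⁻¹ by positivity)] with t h1 h2
  rw [pow_one, Real.norm_eq_abs] at h1
  have h3 : c0 * |t| ≤ |c0| * (2*(|c0|+1))⁻¹ :=
    mul_le_mul (le_abs_self c0) h2 (abs_nonneg t) (abs_nonneg c0)
  have hpos : (0:ℝ) < 2*(|c0|+1) := by positivity
  have h4 : |c0| * (2*(|c0|+1))⁻¹ ≤ 1/2 := by
    rw [← div_eq_mul_inv, div_le_iff₀ hpos]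
    nlinarith [abs_nonneg c0]
  linarith

lemma bigO_main (A B C : Matrix (Fin n) (Fin n) ℂ) (P Ωf : ℝ → Matrix (Fin n) (Fin n) ℂ)
    (hP : ∀ t : ℝ, P t =
      (1 - ((t:ℂ)/2) • A)⁻¹ * (1 + ((t:ℂ)/2) • A) *
      ((1 - ((t:ℂ)/2) • B)⁻¹ * (1 + ((t:ℂ)/2) • B)) *
      ((1 - ((t:ℂ)/2) • C)⁻¹ * (1 + ((t:ℂ)/2) • C)))
    (hΩ : ∀ t : ℝ, Ωf t = (2:ℂ) • ((P t - 1) * (1 + P t)⁻¹)) :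
    (fun t : ℝ => Ωf t -
      tauE (((t:ℂ)/2)•A) (((t:ℂ)/2)•B) (((t:ℂ)/2)•C)) =O[nhds 0] fun t => t^4 := by
  have hR4 := R_sub_O A B C P Ωf hP hΩ
  have hR1 := R_O A B C P Ωf hP hΩ
  have hρ1 := rho1_O (aF_O A) (aF_O B) (aF_O C)
  have hQ := Q_O (aF_O A) (aF_O B) (aF_O C)
  have hK := K_O (aF_O A) (aF_O B) (aF_O C)
  have hρ2 : (fun t : ℝ => rho1E (((t:ℂ)/2)•A) (((t:ℂ)/2)•B) (((t:ℂ)/2)•C)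
      + QE (((t:ℂ)/2)•A) (((t:ℂ)/2)•B) (((t:ℂ)/2)•C)) =O[nhds 0] fun t => t^1 :=
    hρ1.add (hQ.trans (hpow_le (by norm_num)))
  have hRmρ2 : (fun t : ℝ => (P t - 1) -
      (rho1E (((t:ℂ)/2)•A) (((t:ℂ)/2)•B) (((t:ℂ)/2)•C)
        + QE (((t:ℂ)/2)•A) (((t:ℂ)/2)•B) (((t:ℂ)/2)•C))) =O[nhds 0] fun t => t^3 :=
    ((hR4.trans (hpow_le (by norm_num))).add hK).congr_left fun t => by abel
  have hRmρ1 : (fun t : ℝ => (P t - 1) -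
      rho1E (((t:ℂ)/2)•A) (((t:ℂ)/2)•B) (((t:ℂ)/2)•C)) =O[nhds 0] fun t => t^2 :=
    ((hRmρ2.trans (hpow_le (by norm_num))).add (hQ)).congr_left fun t => by abel
  have hΩV : ∀ t : ℝ, Ωf t = (P t - 1) * ((2:ℂ)•(1 + P t)⁻¹) := fun t => by
    rw [hΩ t, mul_smul_comm]
  have hV1 : (fun t : ℝ => (2:ℂ)•(1 + P t)⁻¹) =O[nhds 0] fun _ => (1:ℝ) := by
    refine IsBigO.of_bound (2*‖(1:𝕄)‖) ?_
    filter_upwards [ev_Rsmall A B C P Ωf hP hΩ] with t ht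
    rw [show ‖(1:ℝ)‖ = 1 from norm_one, mul_one]
    exact (V_props (P t) ht).2.1
  have hΩO : (fun t : ℝ => Ωf t) =O[nhds 0] fun t => t^1 := by
    have h := hR1.mul hV1
    have h' : (fun t : ℝ => (P t - 1) * ((2:ℂ)•(1 + P t)⁻¹)) =O[nhds 0] fun t => t^1 := by
      simpa using h
    exact h'.congr_left fun t => (hΩV t).symm
  -- pointwise recursion, eventually
  have hsplit : ∀ᶠ t : ℝ in nhds 0,
      (8:ℂ)•(Ωf t - tauE (((t:ℂ)/2)•A) (((t:ℂ)/2)•B) (((t:ℂ)/2)•C)) =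
      (8:ℂ)•((P t - 1) - (rho1E (((t:ℂ)/2)•A) (((t:ℂ)/2)•B) (((t:ℂ)/2)•C)
          + QE (((t:ℂ)/2)•A) (((t:ℂ)/2)•B) (((t:ℂ)/2)•C)
          + KE (((t:ℂ)/2)•A) (((t:ℂ)/2)•B) (((t:ℂ)/2)•C)))
        - (4:ℂ)•((P t - 1)*(P t - 1)
          - (rho1E (((t:ℂ)/2)•A) (((t:ℂ)/2)•B) (((t:ℂ)/2)•C)
              + QE (((t:ℂ)/2)•A) (((t:ℂ)/2)•B) (((t:ℂ)/2)•C))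
            * (rho1E (((t:ℂ)/2)•A) (((t:ℂ)/2)•B) (((t:ℂ)/2)•C)
              + QE (((t:ℂ)/2)•A) (((t:ℂ)/2)•B) (((t:ℂ)/2)•C)))
        + (2:ℂ)•((P t - 1)*((P t - 1)*(P t - 1))
          - rho1E (((t:ℂ)/2)•A) (((t:ℂ)/2)•B) (((t:ℂ)/2)•C)
            * (rho1E (((t:ℂ)/2)•A) (((t:ℂ)/2)•B) (((t:ℂ)/2)•C)
              * rho1E (((t:ℂ)/2)•A) (((t:ℂ)/2)•B) (((t:ℂ)/2)•C)))
        - (P t - 1)*((P t - 1)*((P t - 1)*Ωf t))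
        + ((8:ℂ)•(rho1E (((t:ℂ)/2)•A) (((t:ℂ)/2)•B) (((t:ℂ)/2)•C)
            + QE (((t:ℂ)/2)•A) (((t:ℂ)/2)•B) (((t:ℂ)/2)•C)
            + KE (((t:ℂ)/2)•A) (((t:ℂ)/2)•B) (((t:ℂ)/2)•C))
          - (4:ℂ)•((rho1E (((t:ℂ)/2)•A) (((t:ℂ)/2)•B) (((t:ℂ)/2)•C)
              + QE (((t:ℂ)/2)•A) (((t:ℂ)/2)•B) (((t:ℂ)/2)•C))
            * (rho1E (((t:ℂ)/2)•A) (((t:ℂ)/2)•B) (((t:ℂ)/2)•C)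
              + QE (((t:ℂ)/2)•A) (((t:ℂ)/2)•B) (((t:ℂ)/2)•C)))
          + (2:ℂ)•(rho1E (((t:ℂ)/2)•A) (((t:ℂ)/2)•B) (((t:ℂ)/2)•C)
            * (rho1E (((t:ℂ)/2)•A) (((t:ℂ)/2)•B) (((t:ℂ)/2)•C)
              * rho1E (((t:ℂ)/2)•A) (((t:ℂ)/2)•B) (((t:ℂ)/2)•C)))
          - (8:ℂ)•tauE (((t:ℂ)/2)•A) (((t:ℂ)/2)•B) (((t:ℂ)/2)•C)) := by
    filter_upwards [ev_Rsmall A B C P Ωf hP hΩ] with t ht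
    have hV := (V_props (P t) ht).2.2
    have hΩVt : Ωf t = (P t - 1) * ((2:ℂ)•(1 + P t)⁻¹) := hΩV t
    have hrec : Ωf t = (P t - 1) - (1/2:ℂ)•((P t - 1)*Ωf t) := by
      calc Ωf t = (P t - 1) * ((2:ℂ)•(1 + P t)⁻¹) := hΩVt
        _ = (P t - 1) * (1 - (1/2:ℂ)•((P t - 1)*((2:ℂ)•(1 + P t)⁻¹))) :=
            congrArg (fun w => (P t - 1) * w) hV
        _ = (P t - 1) - (1/2:ℂ)•((P t - 1)*((P t - 1)*((2:ℂ)•(1 + P t)⁻¹))) := by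
            rw [mul_sub, mul_one, mul_smul_comm]
        _ = (P t - 1) - (1/2:ℂ)•((P t - 1)*Ωf t) := by rw [← hΩVt]
    have h2 : (P t - 1)*Ωf t
        = (P t - 1)*(P t - 1) - (1/2:ℂ)•((P t - 1)*((P t - 1)*Ωf t)) := by
      calc (P t - 1)*Ωf t = (P t - 1)*((P t - 1) - (1/2:ℂ)•((P t - 1)*Ωf t)) :=
            congrArg (fun w => (P t - 1) * w) hrec
        _ = (P t - 1)*(P t - 1) - (1/2:ℂ)•((P t - 1)*((P t - 1)*Ωf t)) := by
            rw [mul_sub, mul_smul_comm]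
    have h3 : (P t - 1)*((P t - 1)*Ωf t)
        = (P t - 1)*((P t - 1)*(P t - 1))
          - (1/2:ℂ)•((P t - 1)*((P t - 1)*((P t - 1)*Ωf t))) := by
      calc (P t - 1)*((P t - 1)*Ωf t)
          = (P t - 1)*((P t - 1)*(P t - 1) - (1/2:ℂ)•((P t - 1)*((P t - 1)*Ωf t))) :=
            congrArg (fun w => (P t - 1) * w) h2
        _ = _ := by rw [mul_sub, mul_smul_comm]
    have h8 : (8:ℂ)•Ωf t = (8:ℂ)•(P t - 1) - (4:ℂ)•((P t - 1)*(P t - 1))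
        + (2:ℂ)•((P t - 1)*((P t - 1)*(P t - 1)))
        - (P t - 1)*((P t - 1)*((P t - 1)*Ωf t)) := by
      calc (8:ℂ)•Ωf t = (8:ℂ)•((P t - 1) - (1/2:ℂ)•((P t - 1)*Ωf t)) :=
            congrArg (fun w => (8:ℂ)•w) hrec
        _ = (8:ℂ)•(P t - 1) - (4:ℂ)•((P t - 1)*Ωf t) := by module
        _ = (8:ℂ)•(P t - 1) - (4:ℂ)•((P t - 1)*(P t - 1)
              - (1/2:ℂ)•((P t - 1)*((P t - 1)*Ωf t))) :=
            congrArg (fun w => (8:ℂ)•(P t - 1) - (4:ℂ)•w) h2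
        _ = (8:ℂ)•(P t - 1) - (4:ℂ)•((P t - 1)*(P t - 1))
              + (2:ℂ)•((P t - 1)*((P t - 1)*Ωf t)) := by module
        _ = (8:ℂ)•(P t - 1) - (4:ℂ)•((P t - 1)*(P t - 1))
              + (2:ℂ)•((P t - 1)*((P t - 1)*(P t - 1))
                - (1/2:ℂ)•((P t - 1)*((P t - 1)*((P t - 1)*Ωf t)))) :=
            congrArg (fun w => (8:ℂ)•(P t - 1) - (4:ℂ)•((P t - 1)*(P t - 1)) + (2:ℂ)•w) h3
        _ = _ := by module
    rw [smul_sub, h8]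
    module
  -- IsBigO of the big decomposition
  have T1 := smulO hR4 (8:ℂ)
  have T2 := smulO (((hmulO hR1 hRmρ2 rfl).add (hmulO hRmρ2 hρ2 rfl)).congr_left
    (fun t => tele2 _ _)) (4:ℂ)
  have T3 := smulO ((((hmulO hRmρ1 (hmulO hR1 hR1 rfl) rfl).add
      (hmulO hρ1 (hmulO hRmρ1 hR1 rfl) rfl)).add
      (hmulO hρ1 (hmulO hρ1 hRmρ1 rfl) rfl)).congr_left
    (fun t => tele3c _ _)) (2:ℂ)
  have T4 := hmulO hR1 (hmulO hR1 (hmulO hR1 hΩO rfl) rfl) rfl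
  have T5 := ((smulO (hmulO hQ hQ rfl) (4:ℂ)).neg_left).congr_left
    (fun t => (key_smul (((t:ℂ)/2)•A) (((t:ℂ)/2)•B) (((t:ℂ)/2)•C)).symm)
  have hbigsum := ((((T1.sub T2).add T3).sub T4).add T5)
  have h8O : (fun t : ℝ => (8:ℂ)•(Ωf t
      - tauE (((t:ℂ)/2)•A) (((t:ℂ)/2)•B) (((t:ℂ)/2)•C))) =O[nhds 0] fun t => t^4 :=
    hbigsum.congr' (hsplit.mono fun t h => h.symm) Filter.EventuallyEq.rfl
  exact unsmulO h8O

lemma ev_main (A B C : Matrix (Fin n) (Fin n) ℂ) (P Ωf : ℝ → Matrix (Fin n) (Fin n) ℂ)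
    (hP : ∀ t : ℝ, P t =
      (1 - ((t:ℂ)/2) • A)⁻¹ * (1 + ((t:ℂ)/2) • A) *
      ((1 - ((t:ℂ)/2) • B)⁻¹ * (1 + ((t:ℂ)/2) • B)) *
      ((1 - ((t:ℂ)/2) • C)⁻¹ * (1 + ((t:ℂ)/2) • C)))
    (hΩ : ∀ t : ℝ, Ωf t = (2:ℂ) • ((P t - 1) * (1 + P t)⁻¹)) : ∀ᶠ t : ℝ in nhds 0,
    IsUnit (1 - ((t:ℂ)/2) • A) ∧ IsUnit (1 - ((t:ℂ)/2) • B) ∧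
    IsUnit (1 - ((t:ℂ)/2) • C) ∧ IsUnit (1 + P t) ∧
    (1 - (1/2 : ℂ) • Ωf t)⁻¹ * (1 + (1/2 : ℂ) • Ωf t) = P t := by
  filter_upwards [ev_small A, ev_small B, ev_small C, ev_Rsmall A B C P Ωf hP hΩ] with t h1 h2 h3 h4
  exact ⟨(inv_bound _ h1).1, (inv_bound _ h2).1, (inv_bound _ h3).1,
    (V_props (P t) h4).1, cayley_inv (P t) (Ωf t) (V_props (P t) h4).1 (hΩ t)⟩

end MainPart

/-- Cayley–BCH formula for a product of three Cayley transforms, up to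
order four. -/
theorem cayley_BCH_three
    (n : ℕ) (hn : 1 ≤ n)
    (A B C : Matrix (Fin n) (Fin n) ℂ)
    (P Ωf : ℝ → Matrix (Fin n) (Fin n) ℂ)
    (hP : ∀ t : ℝ, P t =
      (1 - ((t:ℂ)/2) • A)⁻¹ * (1 + ((t:ℂ)/2) • A) *
      ((1 - ((t:ℂ)/2) • B)⁻¹ * (1 + ((t:ℂ)/2) • B)) *
      ((1 - ((t:ℂ)/2) • C)⁻¹ * (1 + ((t:ℂ)/2) • C)))
    (hΩ : ∀ t : ℝ, Ωf t = (2:ℂ) • ((P t - 1) * (1 + P t)⁻¹)) :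
    ∃ δ > 0,
      (∀ t : ℝ, |t| < δ →
        IsUnit (1 - ((t:ℂ)/2) • A) ∧ IsUnit (1 - ((t:ℂ)/2) • B) ∧
        IsUnit (1 - ((t:ℂ)/2) • C) ∧ IsUnit (1 + P t) ∧
        (1 - (1/2 : ℂ) • Ωf t)⁻¹ * (1 + (1/2 : ℂ) • Ωf t) = P t) ∧
      ∃ C₀ > 0, ∀ t : ℝ, |t| < δ →
        ‖Ωf t - ((t:ℂ) • (A + B + C)
          + ((t:ℂ)^2/2) • ((A*B - B*A) + (A*C - C*A) + (B*C - C*B))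
          + (t:ℂ)^3 • ((1/4 : ℂ) • ((A*B - B*A)*C - C*(A*B - B*A))
            - (1/4 : ℂ) • (A*C*B + B*C*A)
            - (1/4 : ℂ) • (A*B*A + A*C*A + B*A*B + B*C*B + C*A*C + C*B*C)))‖
          ≤ C₀ * |t|^4 := by
  obtain ⟨c0, hc0⟩ := (bigO_main A B C P Ωf hP hΩ).bound
  have hall := (ev_main A B C P Ωf hP hΩ).and hc0
  rw [Metric.eventually_nhds_iff] at hall
  obtain ⟨δ, hδ, hδall⟩ := hall
  refine ⟨δ, hδ, fun t ht => (hδall (by rwa [Real.dist_eq, sub_zero])).1,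
    max c0 1, lt_of_lt_of_le zero_lt_one (le_max_right _ _), fun t ht => ?_⟩
  have h1 := (hδall (y := t) (by rwa [Real.dist_eq, sub_zero])).2
  rw [tau_subst t A B C]
  rw [Real.norm_eq_abs, abs_pow] at h1
  have h2 : c0 * |t|^4 ≤ max c0 1 * |t|^4 :=
    mul_le_mul_of_nonneg_right (le_max_left _ _) (by positivity)
  linarith
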